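/- arXiv:2305.07480 — 3 statements merged into one kernel-verified Lean document; each statement's English description precedes it below -/
import Mathlib

section
/- Let V(x) = Σ_{i=1}^3 A_i e^{a_i x} with a_1 < a_2 < a_3 < 0, A_3 > 0, A_2 > 0, A_1 < 0, and suppose V(0) > 0, V'(0) = 0, V''(0) < 0. Then there exists exactly one x_b > 0 such that (V'(x_b))^2 - V(x_b)·V''(x_b) = 0. -/
open Real Filter

theorem stmt4 (a1 a2 a3 A1 A2 A3 : ℝ) (h12 : a1 < a2) (h23 : a2 < a3) (h3 : a3 < 0)
    (hA3 : 0 < A3) (hA2 : 0 < A2) (hA1 : A1 < 0)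
    (V : ℝ → ℝ)
    (hV : V = fun x => A1 * Real.exp (a1 * x) + A2 * Real.exp (a2 * x) + A3 * Real.exp (a3 * x))
    (hV0 : 0 < V 0) (hV'0 : deriv V 0 = 0) (hV''0 : deriv (deriv V) 0 < 0) :
    ∃! xb : ℝ, 0 < xb ∧ (deriv V xb) ^ 2 - V xb * deriv (deriv V) xb = 0 := by
  -- first derivative
  have hd1 : deriv V = fun x => A1 * a1 * Real.exp (a1 * x) + A2 * a2 * Real.exp (a2 * x)
      + A3 * a3 * Real.exp (a3 * x) := by
    funext x
    have h : HasDerivAt V (A1 * a1 * Real.exp (a1 * x) + A2 * a2 * Real.exp (a2 * x)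
        + A3 * a3 * Real.exp (a3 * x)) x := by
      rw [hV]
      have e1 : HasDerivAt (fun y : ℝ => Real.exp (a1 * y)) (Real.exp (a1 * x) * a1) x :=
        (Real.hasDerivAt_exp (a1 * x)).comp x (by simpa using (hasDerivAt_id x).const_mul a1)
      have e2 : HasDerivAt (fun y : ℝ => Real.exp (a2 * y)) (Real.exp (a2 * x) * a2) x :=
        (Real.hasDerivAt_exp (a2 * x)).comp x (by simpa using (hasDerivAt_id x).const_mul a2)
      have e3 : HasDerivAt (fun y : ℝ => Real.exp (a3 * y)) (Real.exp (a3 * x) * a3) x :=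
        (Real.hasDerivAt_exp (a3 * x)).comp x (by simpa using (hasDerivAt_id x).const_mul a3)
      have := ((e1.const_mul A1).add (e2.const_mul A2)).add (e3.const_mul A3)
      exact this.congr_deriv (by ring)
    exact h.deriv
  -- second derivative
  have hd2 : deriv (deriv V) = fun x => A1 * a1 ^ 2 * Real.exp (a1 * x)
      + A2 * a2 ^ 2 * Real.exp (a2 * x) + A3 * a3 ^ 2 * Real.exp (a3 * x) := by
    funext x
    have h : HasDerivAt (deriv V) (A1 * a1 ^ 2 * Real.exp (a1 * x)
        + A2 * a2 ^ 2 * Real.exp (a2 * x) + A3 * a3 ^ 2 * Real.exp (a3 * x)) x := by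
      rw [hd1]
      have e1 : HasDerivAt (fun y : ℝ => Real.exp (a1 * y)) (Real.exp (a1 * x) * a1) x :=
        (Real.hasDerivAt_exp (a1 * x)).comp x (by simpa using (hasDerivAt_id x).const_mul a1)
      have e2 : HasDerivAt (fun y : ℝ => Real.exp (a2 * y)) (Real.exp (a2 * x) * a2) x :=
        (Real.hasDerivAt_exp (a2 * x)).comp x (by simpa using (hasDerivAt_id x).const_mul a2)
      have e3 : HasDerivAt (fun y : ℝ => Real.exp (a3 * y)) (Real.exp (a3 * x) * a3) x :=
        (Real.hasDerivAt_exp (a3 * x)).comp x (by simpa using (hasDerivAt_id x).const_mul a3)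
      have := ((e1.const_mul (A1 * a1)).add (e2.const_mul (A2 * a2))).add
        (e3.const_mul (A3 * a3))
      exact this.congr_deriv (by ring)
    exact h.deriv
  set B1 : ℝ := -(A1 * A2) * (a1 - a2) ^ 2 with hB1
  set B2 : ℝ := -(A1 * A3) * (a1 - a3) ^ 2 with hB2
  set B3 : ℝ := -(A2 * A3) * (a2 - a3) ^ 2 with hB3
  set G : ℝ → ℝ := fun x => B1 * Real.exp ((a1 - a3) * x) + B2 * Real.exp ((a1 - a2) * x) + B3
    with hG
  have hB1pos : 0 < B1 := by
    have h1 : 0 < -(A1 * A2) := by nlinarith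
    have h2 : 0 < (a1 - a2) ^ 2 := by nlinarith [sq_nonneg (a1 - a2)]
    exact mul_pos h1 h2
  have hB2pos : 0 < B2 := by
    have h1 : 0 < -(A1 * A3) := by nlinarith
    have h2 : 0 < (a1 - a3) ^ 2 := by nlinarith [sq_nonneg (a1 - a3)]
    exact mul_pos h1 h2
  have hB3neg : B3 < 0 := by
    have h1 : 0 < A2 * A3 := mul_pos hA2 hA3
    have h2 : 0 < (a2 - a3) ^ 2 := by nlinarith [sq_nonneg (a2 - a3)]
    nlinarith
  -- the key factorization
  have key : ∀ x : ℝ, (deriv V x) ^ 2 - V x * deriv (deriv V) x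
      = Real.exp ((a2 + a3) * x) * G x := by
    intro x
    rw [hd2, hd1, hV, hG]
    simp only
    have e12 : Real.exp ((a2 + a3) * x) * Real.exp ((a1 - a3) * x)
        = Real.exp (a1 * x) * Real.exp (a2 * x) := by
      rw [← Real.exp_add, ← Real.exp_add]; ring_nf
    have e13 : Real.exp ((a2 + a3) * x) * Real.exp ((a1 - a2) * x)
        = Real.exp (a1 * x) * Real.exp (a3 * x) := by
      rw [← Real.exp_add, ← Real.exp_add]; ring_nf
    have e23 : Real.exp ((a2 + a3) * x) = Real.exp (a2 * x) * Real.exp (a3 * x) := by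
      rw [← Real.exp_add]; ring_nf
    rw [hB1, hB2, hB3]
    linear_combination ((A1 * A2) * (a1 - a2) ^ 2) * e12
      + ((A1 * A3) * (a1 - a3) ^ 2) * e13 + ((A2 * A3) * (a2 - a3) ^ 2) * e23
  -- G is strictly decreasing
  have hGanti : StrictAnti G := by
    intro x y hxy
    have h1 : Real.exp ((a1 - a3) * y) < Real.exp ((a1 - a3) * x) := by
      apply Real.exp_lt_exp.mpr; nlinarith
    have h2 : Real.exp ((a1 - a2) * y) < Real.exp ((a1 - a2) * x) := by
      apply Real.exp_lt_exp.mpr; nlinarith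
    simp only [hG]
    have := mul_lt_mul_of_pos_left h1 hB1pos
    have := mul_lt_mul_of_pos_left h2 hB2pos
    linarith
  -- G 0 > 0
  have hG0 : 0 < G 0 := by
    have := key 0
    rw [hV'0] at this
    simp only [mul_zero, Real.exp_zero, one_mul] at this
    nlinarith
  -- G is eventually negative
  have hcont : Continuous G := by
    rw [hG]
    exact ((continuous_const.mul (Real.continuous_exp.comp (continuous_const.mul
      continuous_id))).add (continuous_const.mul (Real.continuous_exp.comp
      (continuous_const.mul continuous_id)))).add continuous_const
  have hlim : Tendsto G atTop (nhds (B1 * 0 + B2 * 0 + B3)) := by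
    apply Tendsto.add
    apply Tendsto.add
    · apply Tendsto.const_mul
      have h : Tendsto (fun x : ℝ => (a1 - a3) * x) atTop atBot :=
        (tendsto_const_mul_atBot_of_neg (by linarith : a1 - a3 < 0)).mpr tendsto_id
      exact Real.tendsto_exp_atBot.comp h
    · apply Tendsto.const_mul
      have h : Tendsto (fun x : ℝ => (a1 - a2) * x) atTop atBot :=
        (tendsto_const_mul_atBot_of_neg (by linarith : a1 - a2 < 0)).mpr tendsto_id
      exact Real.tendsto_exp_atBot.comp h
    · exact tendsto_const_nhds
  have hneg : ∃ x1 : ℝ, 0 < x1 ∧ G x1 < 0 := by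
    have h0 : B1 * 0 + B2 * 0 + B3 < 0 := by linarith
    have := (hlim.eventually (eventually_lt_nhds h0)).and (eventually_gt_atTop 0)
    obtain ⟨x1, hx1, hx1pos⟩ := this.exists
    exact ⟨x1, hx1pos, hx1⟩
  obtain ⟨x1, hx1pos, hGx1⟩ := hneg
  -- IVT to find the zero
  have hsub : Set.Ioo (G x1) (G 0) ⊆ G '' Set.Ioo 0 x1 :=
    intermediate_value_Ioo' (le_of_lt hx1pos) hcont.continuousOn
  obtain ⟨xb, hxb, hGxb⟩ := hsub ⟨hGx1, hG0⟩
  refine ⟨xb, ⟨hxb.1, ?_⟩, ?_⟩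
  · rw [key xb, hGxb, mul_zero]
  · rintro y ⟨hy, hFy⟩
    rw [key y] at hFy
    have hGy : G y = 0 := by
      have := Real.exp_pos ((a2 + a3) * y)
      rcases mul_eq_zero.mp hFy with h | h
      · exact absurd h (ne_of_gt this)
      · exact h
    exact hGanti.injective (by rw [hGy, hGxb])
end

section
/- Let V(x) = Σ_{i=1}^3 A_i e^{a_i x} with a_1 < a_2 < a_3 < 0, A_3 > 0, V(0) > 0, V'(0) = 0, V''(0) < 0. Then the function -V'/V admits a local maximum at some x_b > 0 if and only if A_2 > 0. -/
open Real Filter Set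

lemma hasDerivAt_cexp (b B x : ℝ) :
    HasDerivAt (fun x => B * Real.exp (b * x)) (B * b * Real.exp (b * x)) x := by
  have h1 : HasDerivAt (fun x : ℝ => b * x) b x := by
    simpa using (hasDerivAt_id x).const_mul b
  have := h1.exp.const_mul B
  rw [show B * b * Real.exp (b * x) = B * (Real.exp (b * x) * b) by ring]
  exact this

lemma hasDerivAt_expsum (b1 b2 b3 B1 B2 B3 x : ℝ) :
    HasDerivAt (fun x => B1 * Real.exp (b1*x) + B2 * Real.exp (b2*x) + B3 * Real.exp (b3*x))
      (B1*b1*Real.exp (b1*x) + B2*b2*Real.exp (b2*x) + B3*b3*Real.exp (b3*x)) x :=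
  ((hasDerivAt_cexp b1 B1 x).add (hasDerivAt_cexp b2 B2 x)).add (hasDerivAt_cexp b3 B3 x)

lemma exp_convex_ineq (a1 a2 a3 x : ℝ) (h12 : a1 < a2) (h23 : a2 < a3) :
    (a3-a1) * (Real.exp (a1*x) * Real.exp (a3*x)) ≤
      (a2-a1) * (Real.exp (a1*x) * Real.exp (a2*x)) + (a3-a2) * (Real.exp (a2*x) * Real.exp (a3*x)) := by
  have h13 : (0:ℝ) < a3 - a1 := by linarith
  have hl : (0:ℝ) ≤ (a2-a1)/(a3-a1) := div_nonneg (by linarith) (by linarith)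
  have hm : (0:ℝ) ≤ (a3-a2)/(a3-a1) := div_nonneg (by linarith) (by linarith)
  have hs : (a2-a1)/(a3-a1) + (a3-a2)/(a3-a1) = 1 := by
    field_simp
    ring
  have hc := convexOn_exp.2 (Set.mem_univ ((a1+a2)*x)) (Set.mem_univ ((a2+a3)*x)) hl hm hs
  simp only [smul_eq_mul] at hc
  have harg : (a2-a1)/(a3-a1) * ((a1+a2)*x) + (a3-a2)/(a3-a1) * ((a2+a3)*x) = (a1+a3)*x := by
    field_simp
    ring
  rw [harg] at hc
  have e13 : Real.exp ((a1+a3)*x) = Real.exp (a1*x) * Real.exp (a3*x) := by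
    rw [← Real.exp_add]; congr 1; ring
  have e12 : Real.exp ((a1+a2)*x) = Real.exp (a1*x) * Real.exp (a2*x) := by
    rw [← Real.exp_add]; congr 1; ring
  have e23 : Real.exp ((a2+a3)*x) = Real.exp (a2*x) * Real.exp (a3*x) := by
    rw [← Real.exp_add]; congr 1; ring
  rw [e13, e12, e23] at hc
  have h2 := mul_le_mul_of_nonneg_left hc (le_of_lt h13)
  have heq : (a3-a1) * ((a2-a1)/(a3-a1) * (Real.exp (a1*x) * Real.exp (a2*x)) +
        (a3-a2)/(a3-a1) * (Real.exp (a2*x) * Real.exp (a3*x)))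
      = (a2-a1) * (Real.exp (a1*x) * Real.exp (a2*x)) + (a3-a2) * (Real.exp (a2*x) * Real.exp (a3*x)) := by
    field_simp
  linarith [h2, heq.le, heq.ge]

lemma core_neg (a1 a2 a3 A1 A2 A3 e1 e2 e3 : ℝ)
    (h12 : a1 < a2) (h23 : a2 < a3) (h3 : a3 < 0) (hA3 : 0 < A3) (hA2 : A2 ≤ 0)
    (hsum : 0 < A1+A2+A3) (hlin : A1*a1+A2*a2+A3*a3 = 0)
    (hquad : A1*a1^2+A2*a2^2+A3*a3^2 < 0)
    (he1 : 0 < e1) (he12 : e1 ≤ e2) (he23 : e2 ≤ e3)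
    (hconv : (a3-a1)*(e1*e3) ≤ (a2-a1)*(e1*e2) + (a3-a2)*(e2*e3)) :
    A1*A2*(a1-a2)^2*(e1*e2) + A1*A3*(a1-a3)^2*(e1*e3) + A2*A3*(a2-a3)^2*(e2*e3) < 0 := by
  have he2 : 0 < e2 := lt_of_lt_of_le he1 he12
  have he3 : 0 < e3 := lt_of_lt_of_le he2 he23
  have hlinsq : (A1*a1+A2*a2+A3*a3)^2 = 0 := by rw [hlin]; ring
  have hcsum : A1*A2*(a1-a2)^2 + A1*A3*(a1-a3)^2 + A2*A3*(a2-a3)^2 < 0 := by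
    nlinarith [mul_neg_of_neg_of_pos hquad hsum, hlinsq]
  rcases le_or_gt A1 0 with hA1 | hA1
  · -- A1 ≤ 0
    have hc12 : 0 ≤ A1*A2 := by nlinarith
    have hc23 : A2*A3 ≤ 0 := mul_nonpos_of_nonpos_of_nonneg hA2 (le_of_lt hA3)
    have t1 : A1*A2*(a1-a2)^2*(e1*e2) ≤ A1*A2*(a1-a2)^2*(e1*e3) := by
      apply mul_le_mul_of_nonneg_left _ (by positivity)
      exact mul_le_mul_of_nonneg_left he23 (le_of_lt he1)
    have t3 : A2*A3*(a2-a3)^2*(e2*e3) ≤ A2*A3*(a2-a3)^2*(e1*e3) := by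
      have h23' : e1*e3 ≤ e2*e3 := mul_le_mul_of_nonneg_right he12 (le_of_lt he3)
      have hcc : A2*A3*(a2-a3)^2 ≤ 0 := mul_nonpos_of_nonpos_of_nonneg hc23 (sq_nonneg _)
      exact mul_le_mul_of_nonpos_left h23' hcc
    have hfin : (A1*A2*(a1-a2)^2 + A1*A3*(a1-a3)^2 + A2*A3*(a2-a3)^2) * (e1*e3) < 0 :=
      mul_neg_of_neg_of_pos hcsum (by positivity)
    linarith [hfin, t1, t3]
  · -- 0 < A1
    have hsq13 : (0:ℝ) < (a1-a3)^2 := by nlinarith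
    have hc13 : 0 < A1*A3*(a1-a3)^2 := mul_pos (mul_pos hA1 hA3) hsq13
    have hstep : A1*A3*(a1-a3)^2 * ((a3-a1)*(e1*e3)) ≤
        A1*A3*(a1-a3)^2 * ((a2-a1)*(e1*e2) + (a3-a2)*(e2*e3)) :=
      mul_le_mul_of_nonneg_left hconv (le_of_lt hc13)
    have hq' : A1*a1*(a1-a2) + A3*a3*(a3-a2) < 0 := by
      have heq : A1*a1*(a1-a2)+A3*a3*(a3-a2)
          = (A1*a1^2+A2*a2^2+A3*a3^2) - a2*(A1*a1+A2*a2+A3*a3) := by ring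
      rw [heq, hlin]
      linarith
    set S := A1+A2+A3 with hS
    have hD2neg : A3*(a3-a2)*(a3-a1)*(a3*S) < 0 := by
      have h1 : a3 * S < 0 := mul_neg_of_neg_of_pos h3 hsum
      have hpos : 0 < A3*(a3-a2)*(a3-a1) :=
        mul_pos (mul_pos hA3 (by linarith)) (by linarith)
      exact mul_neg_of_pos_of_neg hpos h1
    have hDsumneg : A1*(a2-a1)*(a3-a1)*(-(a1)*S) + A3*(a3-a2)*(a3-a1)*(a3*S) < 0 := by
      have heq : A1*(a2-a1)*(a3-a1)*(-(a1)*S) + A3*(a3-a2)*(a3-a1)*(a3*S)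
          = (a3-a1)*S*(A1*a1*(a1-a2)+A3*a3*(a3-a2)) := by rw [hS]; ring
      rw [heq]
      exact mul_neg_of_pos_of_neg (mul_pos (by linarith) hsum) hq'
    -- multiplied-out identities
    have hD1e : ((a3-a1)*(A1*A2*(a1-a2)^2) + (a2-a1)*(A1*A3*(a1-a3)^2))*(e1*e2)
        = (A1*(a2-a1)*(a3-a1)*(-(a1)*S))*(e1*e2) := by
      have h : (a3-a1)*(A1*A2*(a1-a2)^2) + (a2-a1)*(A1*A3*(a1-a3)^2)
          = A1*(a2-a1)*(a3-a1)*(-(a1)*S) := by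
        rw [hS]; linear_combination (A1*(a2-a1)*(a3-a1)) * hlin
      rw [h]
    have hD2e : ((a3-a1)*(A2*A3*(a2-a3)^2) + (a3-a2)*(A1*A3*(a1-a3)^2))*(e2*e3)
        = (A3*(a3-a2)*(a3-a1)*(a3*S))*(e2*e3) := by
      have h : (a3-a1)*(A2*A3*(a2-a3)^2) + (a3-a2)*(A1*A3*(a1-a3)^2)
          = A3*(a3-a2)*(a3-a1)*(a3*S) := by
        rw [hS]; linear_combination (-(A3*(a3-a2)*(a3-a1))) * hlin
      rw [h]
    have hmono : (A3*(a3-a2)*(a3-a1)*(a3*S)) * (e2*e3) ≤ (A3*(a3-a2)*(a3-a1)*(a3*S)) * (e1*e2) := by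
      apply mul_le_mul_of_nonpos_left _ (le_of_lt hD2neg)
      calc e1*e2 = e2*e1 := by ring
        _ ≤ e2*e3 := mul_le_mul_of_nonneg_left (le_trans he12 he23) (le_of_lt he2)
    have hfin : (A1*(a2-a1)*(a3-a1)*(-(a1)*S) + A3*(a3-a2)*(a3-a1)*(a3*S)) * (e1*e2) < 0 :=
      mul_neg_of_neg_of_pos hDsumneg (by positivity)
    have h31 : (0:ℝ) < a3 - a1 := by linarith
    have hmain : (a3-a1) * (A1*A2*(a1-a2)^2*(e1*e2) + A1*A3*(a1-a3)^2*(e1*e3) + A2*A3*(a2-a3)^2*(e2*e3)) < 0 := by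
      linarith [hstep, hmono, hfin, hD1e, hD2e]
    by_contra hcon
    push_neg at hcon
    have := mul_nonneg (le_of_lt h31) hcon
    linarith

lemma G_identity (a1 a2 a3 A1 A2 A3 x : ℝ) :
    (A1*a1*Real.exp (a1*x) + A2*a2*Real.exp (a2*x) + A3*a3*Real.exp (a3*x))^2
      - (A1*a1^2*Real.exp (a1*x) + A2*a2^2*Real.exp (a2*x) + A3*a3^2*Real.exp (a3*x))
        * (A1*Real.exp (a1*x) + A2*Real.exp (a2*x) + A3*Real.exp (a3*x))
    = -(A1*A2*(a1-a2)^2*(Real.exp (a1*x)*Real.exp (a2*x))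
        + A1*A3*(a1-a3)^2*(Real.exp (a1*x)*Real.exp (a3*x))
        + A2*A3*(a2-a3)^2*(Real.exp (a2*x)*Real.exp (a3*x))) := by ring

/-- For `A2 ≤ 0` and `x ≥ 0`, we get `V'² - V''·V > 0`. -/
lemma Gpos (a1 a2 a3 A1 A2 A3 x : ℝ)
    (h12 : a1 < a2) (h23 : a2 < a3) (h3 : a3 < 0) (hA3 : 0 < A3) (hA2 : A2 ≤ 0)
    (hsum : 0 < A1+A2+A3) (hlin : A1*a1+A2*a2+A3*a3 = 0)
    (hquad : A1*a1^2+A2*a2^2+A3*a3^2 < 0) (hx : 0 ≤ x) :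
    0 < (A1*a1*Real.exp (a1*x) + A2*a2*Real.exp (a2*x) + A3*a3*Real.exp (a3*x))^2
      - (A1*a1^2*Real.exp (a1*x) + A2*a2^2*Real.exp (a2*x) + A3*a3^2*Real.exp (a3*x))
        * (A1*Real.exp (a1*x) + A2*Real.exp (a2*x) + A3*Real.exp (a3*x)) := by
  rw [G_identity]
  have he12 : Real.exp (a1*x) ≤ Real.exp (a2*x) :=
    Real.exp_le_exp.2 (mul_le_mul_of_nonneg_right (le_of_lt h12) hx)
  have he23 : Real.exp (a2*x) ≤ Real.exp (a3*x) :=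
    Real.exp_le_exp.2 (mul_le_mul_of_nonneg_right (le_of_lt h23) hx)
  have h := core_neg a1 a2 a3 A1 A2 A3 (Real.exp (a1*x)) (Real.exp (a2*x)) (Real.exp (a3*x))
    h12 h23 h3 hA3 hA2 hsum hlin hquad (Real.exp_pos _) he12 he23
    (exp_convex_ineq a1 a2 a3 x h12 h23)
  linarith

lemma no_max_aux (a1 a2 a3 A1 A2 A3 : ℝ) (h12 : a1 < a2) (h23 : a2 < a3) (h3 : a3 < 0)
    (hA3 : 0 < A3) (hA2 : A2 ≤ 0) (hsum : 0 < A1+A2+A3) (hlin : A1*a1+A2*a2+A3*a3 = 0)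
    (hquad : A1*a1^2+A2*a2^2+A3*a3^2 < 0) (xb : ℝ) (hxb : 0 < xb)
    (hmax : IsLocalMax (fun x => -(A1*a1*Real.exp (a1*x) + A2*a2*Real.exp (a2*x) + A3*a3*Real.exp (a3*x))
      / (A1*Real.exp (a1*x) + A2*Real.exp (a2*x) + A3*Real.exp (a3*x))) xb) : False := by
  classical
  set L : ℝ → ℝ := fun x => A1*Real.exp (a1*x) + A2*Real.exp (a2*x) + A3*Real.exp (a3*x) with hLdef
  set V1 : ℝ → ℝ := fun x => A1*a1*Real.exp (a1*x) + A2*a2*Real.exp (a2*x) + A3*a3*Real.exp (a3*x) with hV1def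
  set V2 : ℝ → ℝ := fun x => A1*a1^2*Real.exp (a1*x) + A2*a2^2*Real.exp (a2*x) + A3*a3^2*Real.exp (a3*x) with hV2def
  set f : ℝ → ℝ := fun x => -V1 x / L x with hfdef
  have hmax' : IsLocalMax f xb := hmax
  have hLcont : Continuous L := by
    apply Continuous.add
    apply Continuous.add
    all_goals exact (continuous_const.mul ((Real.continuous_exp.comp (continuous_const.mul continuous_id))))
  have hV1cont : Continuous V1 := by
    apply Continuous.add
    apply Continuous.add
    all_goals exact (continuous_const.mul ((Real.continuous_exp.comp (continuous_const.mul continuous_id))))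
  have hderivL : ∀ x, HasDerivAt L (V1 x) x := fun x => hasDerivAt_expsum a1 a2 a3 A1 A2 A3 x
  have hderivV1 : ∀ x, HasDerivAt V1 (V2 x) x := by
    intro x
    have h := hasDerivAt_expsum a1 a2 a3 (A1*a1) (A2*a2) (A3*a3) x
    have hval : (A1*a1)*a1*Real.exp (a1*x) + (A2*a2)*a2*Real.exp (a2*x) + (A3*a3)*a3*Real.exp (a3*x) = V2 x := by
      rw [hV2def]; ring
    rw [hval] at h
    exact h
  have hG : ∀ x, 0 ≤ x → 0 < V1 x^2 - V2 x * L x := fun x hx =>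
    Gpos a1 a2 a3 A1 A2 A3 x h12 h23 h3 hA3 hA2 hsum hlin hquad hx
  have hfD : ∀ x, L x ≠ 0 → HasDerivAt f ((V1 x^2 - V2 x * L x)/(L x)^2) x := by
    intro x hx
    have h := ((hderivV1 x).neg).div (hderivL x) hx
    have : (V1 x^2 - V2 x * L x)/(L x)^2 = (-V2 x * L x - -V1 x * V1 x)/(L x)^2 := by ring
    rw [this]
    exact h
  rcases eq_or_ne (L xb) 0 with hL0 | hL0
  · -- blow-up case
    have hd : V1 xb ≠ 0 := by
      intro h0
      have h := hG xb (le_of_lt hxb)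
      rw [h0, hL0] at h
      simp at h
    have hslope : Tendsto (slope L xb) (nhdsWithin xb {xb}ᶜ) (nhds (V1 xb)) :=
      hasDerivAt_iff_tendsto_slope.1 (hderivL xb)
    have hmono : nhdsWithin xb (Iio xb) ≤ nhdsWithin xb {xb}ᶜ :=
      nhdsWithin_mono _ (fun y hy => ne_of_lt hy)
    have hslope' : Tendsto (slope L xb) (nhdsWithin xb (Iio xb)) (nhds (V1 xb)) :=
      hslope.mono_left hmono
    -- numerator
    have hnum : Tendsto (fun y => -V1 y) (nhdsWithin xb (Iio xb)) (nhds (-V1 xb)) :=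
      ((hV1cont.tendsto xb).mono_left nhdsWithin_le_nhds).neg
    have hq : Tendsto (fun y => -V1 y / slope L xb y) (nhdsWithin xb (Iio xb)) (nhds (-1)) := by
      have h := hnum.div hslope' hd
      have : -V1 xb / V1 xb = -1 := by field_simp
      rwa [this] at h
    have hinv : Tendsto (fun y => (y - xb)⁻¹) (nhdsWithin xb (Iio xb)) atBot := by
      have h1 : Tendsto (fun y => xb - y) (nhdsWithin xb (Iio xb)) (nhdsWithin 0 (Ioi 0)) := by
        rw [tendsto_nhdsWithin_iff]
        constructor
        · have hc : Continuous fun y : ℝ => xb - y := continuous_const.sub continuous_id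
          have h := (hc.tendsto xb).mono_left (nhdsWithin_le_nhds (s := Iio xb))
          simpa using h
        · filter_upwards [self_mem_nhdsWithin] with y hy
          have hy' : y < xb := hy
          simpa using sub_pos.2 hy'
      have h2 : Tendsto (fun y => (xb - y)⁻¹) (nhdsWithin xb (Iio xb)) atTop :=
        tendsto_inv_nhdsGT_zero.comp h1
      have h3 : Tendsto (fun y => -(xb - y)⁻¹) (nhdsWithin xb (Iio xb)) atBot :=
        tendsto_neg_atTop_atBot.comp h2
      refine h3.congr (fun y => ?_)
      rw [← inv_neg]
      ring_nf
    have htop : Tendsto f (nhdsWithin xb (Iio xb)) atTop := by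
      have hprod : Tendsto (fun y => (-V1 y / slope L xb y) * (y - xb)⁻¹)
          (nhdsWithin xb (Iio xb)) atTop :=
        Tendsto.neg_mul_atBot (by norm_num) hq hinv
      have key : ∀ Av Bv t : ℝ, Bv ≠ 0 → t ≠ 0 → -Av / (Bv/t) * t⁻¹ = -Av / Bv := by
        intro Av Bv t hB ht
        field_simp
      apply hprod.congr'
      filter_upwards [hslope'.eventually_ne hd, self_mem_nhdsWithin] with y hy hylt
      have hyne : y - xb ≠ 0 := by
        have h' : y < xb := hylt
        intro h; exact h'.ne (by linarith)
      have hsl : slope L xb y = L y / (y - xb) := by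
        rw [slope_def_field, hL0]
        rw [div_eq_div_iff hyne hyne]
        ring
      have hLy : L y ≠ 0 := by
        intro h0
        apply hy
        rw [hsl, h0, zero_div]
      show -V1 y / slope L xb y * (y - xb)⁻¹ = -V1 y / L y
      rw [hsl]
      exact key _ _ _ hLy hyne
    have h1 : ∀ᶠ y in nhdsWithin xb (Iio xb), f y ≤ f xb :=
      hmax'.filter_mono nhdsWithin_le_nhds
    have h2 : ∀ᶠ y in nhdsWithin xb (Iio xb), f xb < f y :=
      htop.eventually (eventually_gt_atTop (f xb))
    obtain ⟨y, hy1, hy2⟩ := (h1.and h2).exists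
    linarith
  · -- monotone case
    have hev : ∀ᶠ x in nhds xb, (f x ≤ f xb ∧ L x ≠ 0) ∧ 0 < x := by
      filter_upwards [hmax', hLcont.continuousAt.eventually_ne hL0, eventually_gt_nhds hxb] with
        y h1 h2 h3
      exact ⟨⟨h1, h2⟩, h3⟩
    obtain ⟨l, u, hxmem, hsub⟩ := mem_nhds_iff_exists_Ioo_subset.1 hev
    have hmono : StrictMonoOn f (Set.Ioo l u) := by
      apply strictMonoOn_of_deriv_pos (convex_Ioo l u)
      · apply ContinuousOn.div (hV1cont.neg.continuousOn) (hLcont.continuousOn)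
        intro x hx
        exact (hsub hx).1.2
      · intro x hx
        rw [interior_Ioo] at hx
        have hLx := (hsub hx).1.2
        rw [(hfD x hLx).deriv]
        exact div_pos (hG x (le_of_lt (hsub hx).2)) (pow_two_pos_of_ne_zero hLx)
    have hy1 : xb < (xb + u)/2 := by linarith [hxmem.2]
    have hy2 : (xb + u)/2 < u := by linarith [hxmem.2]
    have hymem : (xb + u)/2 ∈ Set.Ioo l u := ⟨lt_trans hxmem.1 hy1, hy2⟩
    have hlt : f xb < f ((xb + u)/2) := hmono hxmem hymem hy1
    have hle : f ((xb + u)/2) ≤ f xb := (hsub hymem).1.1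
    linarith

set_option maxHeartbeats 2000000 in
lemma max_aux (a1 a2 a3 A1 A2 A3 : ℝ) (h12 : a1 < a2) (h23 : a2 < a3) (h3 : a3 < 0)
    (hA3 : 0 < A3) (hA2 : 0 < A2) (hsum : 0 < A1+A2+A3) (hlin : A1*a1+A2*a2+A3*a3 = 0)
    (hquad : A1*a1^2+A2*a2^2+A3*a3^2 < 0) :
    ∃ xb : ℝ, 0 < xb ∧ IsLocalMax (fun x =>
      -(A1*a1*Real.exp (a1*x) + A2*a2*Real.exp (a2*x) + A3*a3*Real.exp (a3*x))
      / (A1*Real.exp (a1*x) + A2*Real.exp (a2*x) + A3*Real.exp (a3*x))) xb := by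
  classical
  have hlinsq : (A1*a1+A2*a2+A3*a3)^2 = 0 := by rw [hlin]; ring
  have hcsum : A1*A2*(a1-a2)^2 + A1*A3*(a1-a3)^2 + A2*A3*(a2-a3)^2 < 0 := by
    nlinarith [mul_neg_of_neg_of_pos hquad hsum, hlinsq]
  have hsq12 : (0:ℝ) < (a1-a2)^2 := by nlinarith
  have hsq13 : (0:ℝ) < (a1-a3)^2 := by nlinarith
  have hsq23 : (0:ℝ) < (a2-a3)^2 := by nlinarith
  have hA1 : A1 < 0 := by
    by_contra h
    push_neg at h
    have h1 : 0 ≤ A1*A2*(a1-a2)^2 := mul_nonneg (mul_nonneg h hA2.le) (sq_nonneg _)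
    have h2 : 0 ≤ A1*A3*(a1-a3)^2 := mul_nonneg (mul_nonneg h hA3.le) (sq_nonneg _)
    have h3' : 0 < A2*A3*(a2-a3)^2 := mul_pos (mul_pos hA2 hA3) hsq23
    linarith
  have hc12 : A1*A2*(a1-a2)^2 < 0 := mul_neg_of_neg_of_pos (mul_neg_of_neg_of_pos hA1 hA2) hsq12
  have hc13 : A1*A3*(a1-a3)^2 < 0 := mul_neg_of_neg_of_pos (mul_neg_of_neg_of_pos hA1 hA3) hsq13
  have hc23 : 0 < A2*A3*(a2-a3)^2 := mul_pos (mul_pos hA2 hA3) hsq23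
  set L : ℝ → ℝ := fun x => A1*Real.exp (a1*x) + A2*Real.exp (a2*x) + A3*Real.exp (a3*x) with hLdef
  set V1 : ℝ → ℝ := fun x => A1*a1*Real.exp (a1*x) + A2*a2*Real.exp (a2*x) + A3*a3*Real.exp (a3*x) with hV1def
  set V2 : ℝ → ℝ := fun x => A1*a1^2*Real.exp (a1*x) + A2*a2^2*Real.exp (a2*x) + A3*a3^2*Real.exp (a3*x) with hV2def
  set f : ℝ → ℝ := fun x => -V1 x / L x with hfdef
  set g : ℝ → ℝ := fun x => (A1*A2*(a1-a2)^2 * Real.exp ((a2-a3)*x) + A1*A3*(a1-a3)^2)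
      + A2*A3*(a2-a3)^2 * Real.exp ((a2-a1)*x) with hgdef
  have hLcont : Continuous L := by
    apply Continuous.add
    apply Continuous.add
    all_goals exact (continuous_const.mul ((Real.continuous_exp.comp (continuous_const.mul continuous_id))))
  have hV1cont : Continuous V1 := by
    apply Continuous.add
    apply Continuous.add
    all_goals exact (continuous_const.mul ((Real.continuous_exp.comp (continuous_const.mul continuous_id))))
  have hgcont : Continuous g := by
    apply Continuous.add
    apply Continuous.add
    · exact (continuous_const.mul ((Real.continuous_exp.comp (continuous_const.mul continuous_id))))
    · exact continuous_const
    · exact (continuous_const.mul ((Real.continuous_exp.comp (continuous_const.mul continuous_id))))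
  have hderivL : ∀ x, HasDerivAt L (V1 x) x := fun x => hasDerivAt_expsum a1 a2 a3 A1 A2 A3 x
  have hderivV1 : ∀ x, HasDerivAt V1 (V2 x) x := by
    intro x
    have h := hasDerivAt_expsum a1 a2 a3 (A1*a1) (A2*a2) (A3*a3) x
    have hval : (A1*a1)*a1*Real.exp (a1*x) + (A2*a2)*a2*Real.exp (a2*x) + (A3*a3)*a3*Real.exp (a3*x) = V2 x := by
      rw [hV2def]; ring
    rw [hval] at h
    exact h
  have hgD : ∀ x, HasDerivAt g ((A1*A2*(a1-a2)^2)*(a2-a3)*Real.exp ((a2-a3)*x)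
      + (A2*A3*(a2-a3)^2)*(a2-a1)*Real.exp ((a2-a1)*x)) x := by
    intro x
    exact ((hasDerivAt_cexp (a2-a3) (A1*A2*(a1-a2)^2) x).add_const (A1*A3*(a1-a3)^2)).add
      (hasDerivAt_cexp (a2-a1) (A2*A3*(a2-a3)^2) x)
  have hgmono : StrictMono g := by
    apply strictMono_of_deriv_pos
    intro x
    rw [(hgD x).deriv]
    have h1 : 0 < (A1*A2*(a1-a2)^2)*(a2-a3)*Real.exp ((a2-a3)*x) :=
      mul_pos (mul_pos_of_neg_of_neg hc12 (by linarith)) (Real.exp_pos _)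
    have h2 : 0 < (A2*A3*(a2-a3)^2)*(a2-a1)*Real.exp ((a2-a1)*x) :=
      mul_pos (mul_pos hc23 (by linarith)) (Real.exp_pos _)
    linarith
  have hg0 : g 0 < 0 := by
    have : g 0 = A1*A2*(a1-a2)^2 + A1*A3*(a1-a3)^2 + A2*A3*(a2-a3)^2 := by
      rw [hgdef]; simp
    rw [this]; exact hcsum
  -- find X with g X > 0
  obtain ⟨X, hXpos, hgX⟩ : ∃ X, 0 < X ∧ 0 < g X := by
    set M := (1 - (A1*A2*(a1-a2)^2 + A1*A3*(a1-a3)^2)) / (A2*A3*(a2-a3)^2) with hMdef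
    have hMpos : 0 < M := div_pos (by linarith) hc23
    set X := max 1 (Real.log M / (a2-a1)) with hXdef
    have hX1 : (1:ℝ) ≤ X := le_max_left _ _
    have hXpos : (0:ℝ) < X := by linarith
    refine ⟨X, hXpos, ?_⟩
    have h21 : (0:ℝ) < a2 - a1 := by linarith
    have hlog : Real.log M ≤ (a2-a1) * X := by
      have h := le_max_right 1 (Real.log M / (a2-a1))
      calc Real.log M = (a2-a1) * (Real.log M / (a2-a1)) := by field_simp
        _ ≤ (a2-a1) * X := by
            apply mul_le_mul_of_nonneg_left _ h21.le
            exact h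
    have hexpX : M ≤ Real.exp ((a2-a1)*X) := by
      calc M = Real.exp (Real.log M) := (Real.exp_log hMpos).symm
        _ ≤ Real.exp ((a2-a1)*X) := Real.exp_le_exp.2 hlog
    have ht3 : A2*A3*(a2-a3)^2 * M ≤ A2*A3*(a2-a3)^2 * Real.exp ((a2-a1)*X) :=
      mul_le_mul_of_nonneg_left hexpX hc23.le
    have hM : A2*A3*(a2-a3)^2 * M = 1 - (A1*A2*(a1-a2)^2 + A1*A3*(a1-a3)^2) := by
      rw [hMdef]
      exact mul_div_cancel₀ _ hc23.ne'
    have hE1 : Real.exp ((a2-a3)*X) ≤ 1 := by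
      have hlt : (a2-a3)*X < 0 := mul_neg_of_neg_of_pos (by linarith) hXpos
      calc Real.exp ((a2-a3)*X) ≤ Real.exp 0 := Real.exp_le_exp.2 hlt.le
        _ = 1 := Real.exp_zero
    have ht1 : A1*A2*(a1-a2)^2 ≤ A1*A2*(a1-a2)^2 * Real.exp ((a2-a3)*X) := by
      have h := mul_le_mul_of_nonpos_left hE1 hc12.le
      simpa using h
    rw [hgdef]
    simp only
    nlinarith [ht1, ht3, hM]
  -- IVT
  obtain ⟨x0, hx0mem, hgx0⟩ : ∃ x0 ∈ Icc (0:ℝ) X, g x0 = 0 := by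
    have h := intermediate_value_Icc hXpos.le hgcont.continuousOn
    have h0 : (0:ℝ) ∈ Icc (g 0) (g X) := ⟨hg0.le, hgX.le⟩
    obtain ⟨x0, hx0, hx0'⟩ := h h0
    exact ⟨x0, hx0, hx0'⟩
  have hx0pos : 0 < x0 := by
    rcases eq_or_lt_of_le hx0mem.1 with h | h
    · exfalso; rw [← h] at hgx0; linarith
    · exact h
  have hgneg : ∀ x, x < x0 → g x < 0 := by
    intro x hx
    have := hgmono hx
    rwa [hgx0] at this
  have hgpos : ∀ x, x0 < x → 0 < g x := by
    intro x hx
    have := hgmono hx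
    rwa [hgx0] at this
  -- positivity of L on [0, ∞)
  set W : ℝ → ℝ := fun x => A1*Real.exp ((a1-a3)*x) + A2*Real.exp ((a2-a3)*x) + A3 with hWdef
  set φ : ℝ → ℝ := fun x => A1*(a1-a3) + A2*(a2-a3)*Real.exp ((a2-a1)*x) with hφdef
  have hWcont : Continuous W := by
    apply Continuous.add
    apply Continuous.add
    · exact (continuous_const.mul ((Real.continuous_exp.comp (continuous_const.mul continuous_id))))
    · exact (continuous_const.mul ((Real.continuous_exp.comp (continuous_const.mul continuous_id))))
    · exact continuous_const
  have hWD : ∀ x, HasDerivAt W (Real.exp ((a1-a3)*x) * φ x) x := by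
    intro x
    have h := ((hasDerivAt_cexp (a1-a3) A1 x).add (hasDerivAt_cexp (a2-a3) A2 x)).add_const A3
    have he : Real.exp ((a2-a3)*x) = Real.exp ((a1-a3)*x) * Real.exp ((a2-a1)*x) := by
      rw [← Real.exp_add]; congr 1; ring
    have hval : A1*(a1-a3)*Real.exp ((a1-a3)*x) + A2*(a2-a3)*Real.exp ((a2-a3)*x)
        = Real.exp ((a1-a3)*x) * φ x := by
      rw [hφdef]
      simp only
      rw [he]
      ring
    rw [hval] at h
    exact h
  have hφanti : StrictAnti φ := by
    apply strictAnti_of_deriv_neg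
    intro x
    have h := (hasDerivAt_cexp (a2-a1) (A2*(a2-a3)) x).const_add (A1*(a1-a3))
    rw [h.deriv]
    exact mul_neg_of_neg_of_pos
      (mul_neg_of_neg_of_pos (mul_neg_of_pos_of_neg hA2 (by linarith)) (by linarith)) (Real.exp_pos _)
  have hW0 : W 0 = A1 + A2 + A3 := by rw [hWdef]; simp
  have hWlim : Tendsto W atTop (nhds A3) := by
    have h1 : Tendsto (fun x => Real.exp ((a1-a3)*x)) atTop (nhds 0) :=
      Real.tendsto_exp_atBot.comp (Tendsto.const_mul_atTop_of_neg (by linarith) tendsto_id)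
    have h2 : Tendsto (fun x => Real.exp ((a2-a3)*x)) atTop (nhds 0) :=
      Real.tendsto_exp_atBot.comp (Tendsto.const_mul_atTop_of_neg (by linarith) tendsto_id)
    have h := ((h1.const_mul A1).add (h2.const_mul A2)).add_const A3
    simpa using h
  have hWpos : ∀ t, 0 ≤ t → 0 < W t := by
    intro t ht
    rcases lt_or_ge 0 (φ t) with hφt | hφt
    · -- φ positive at t : W monotone on [0, t]
      have hmono : MonotoneOn W (Icc 0 t) := by
        apply monotoneOn_of_deriv_nonneg (convex_Icc 0 t) hWcont.continuousOn
        · intro x _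
          exact (hWD x).differentiableAt.differentiableWithinAt
        · intro x hx
          rw [interior_Icc] at hx
          rw [(hWD x).deriv]
          have : φ t ≤ φ x := (hφanti.antitone hx.2.le)
          have hφx : 0 < φ x := lt_of_lt_of_le hφt this
          positivity
      rcases eq_or_lt_of_le ht with h | h
      · rw [← h, hW0]; exact hsum
      · have := hmono (left_mem_Icc.2 ht) (right_mem_Icc.2 ht) ht
        rw [hW0] at this
        linarith
    · -- φ nonpositive at t : W antitone on [t, ∞), limit A3
      have hanti : AntitoneOn W (Ici t) := by
        apply antitoneOn_of_deriv_nonpos (convex_Ici t) hWcont.continuousOn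
        · intro x _
          exact (hWD x).differentiableAt.differentiableWithinAt
        · intro x hx
          rw [interior_Ici] at hx
          rw [(hWD x).deriv]
          have hφx : φ x < φ t := hφanti hx
          have : φ x ≤ 0 := by linarith
          have he := Real.exp_pos ((a1-a3)*x)
          nlinarith
      have hA3le : A3 ≤ W t := by
        apply le_of_tendsto hWlim
        filter_upwards [eventually_ge_atTop t] with x hx
        exact hanti (by exact self_mem_Ici : t ∈ Ici t) hx hx
      linarith
  have hLW : ∀ x, L x = Real.exp (a3*x) * W x := by
    intro x
    have e1 : Real.exp (a3*x) * Real.exp ((a1-a3)*x) = Real.exp (a1*x) := by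
      rw [← Real.exp_add]; congr 1; ring
    have e2 : Real.exp (a3*x) * Real.exp ((a2-a3)*x) = Real.exp (a2*x) := by
      rw [← Real.exp_add]; congr 1; ring
    rw [hLdef, hWdef]
    simp only
    linear_combination (-A1) * e1 + (-A2) * e2
  have hVpos : ∀ t, 0 ≤ t → 0 < L t := by
    intro t ht
    rw [hLW]
    exact mul_pos (Real.exp_pos _) (hWpos t ht)
  -- key identity
  have hkey : ∀ x, V1 x^2 - V2 x * L x = -(Real.exp ((a1+a3)*x)) * g x := by
    intro x
    have e12 : Real.exp ((a1+a3)*x) * Real.exp ((a2-a3)*x) = Real.exp (a1*x) * Real.exp (a2*x) := by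
      rw [← Real.exp_add, ← Real.exp_add]; congr 1; ring
    have e13 : Real.exp ((a1+a3)*x) = Real.exp (a1*x) * Real.exp (a3*x) := by
      rw [← Real.exp_add]; congr 1; ring
    have e23 : Real.exp ((a1+a3)*x) * Real.exp ((a2-a1)*x) = Real.exp (a2*x) * Real.exp (a3*x) := by
      rw [← Real.exp_add, ← Real.exp_add]; congr 1; ring
    rw [hV1def, hV2def, hLdef, hgdef]
    simp only
    linear_combination (A1*A2*(a1-a2)^2) * e12 + (A1*A3*(a1-a3)^2) * e13 + (A2*A3*(a2-a3)^2) * e23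
  have hfD : ∀ x, L x ≠ 0 → HasDerivAt f ((V1 x^2 - V2 x * L x)/(L x)^2) x := by
    intro x hx
    have h := ((hderivV1 x).neg).div (hderivL x) hx
    have heq : (V1 x^2 - V2 x * L x)/(L x)^2 = (-V2 x * L x - -V1 x * V1 x)/(L x)^2 := by ring
    rw [heq]
    exact h
  -- monotone on [x0/2, x0], antitone on [x0, x0+1]
  have hcontf : ∀ s : Set ℝ, (∀ x ∈ s, (0:ℝ) ≤ x) → ContinuousOn f s := by
    intro s hs
    apply ContinuousOn.div (hV1cont.neg.continuousOn) (hLcont.continuousOn)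
    intro x hx
    exact (hVpos x (hs x hx)).ne'
  have hmonoOn : MonotoneOn f (Icc (x0/2) x0) := by
    apply monotoneOn_of_deriv_nonneg (convex_Icc _ _)
    · exact hcontf _ (fun x hx => by have := hx.1; linarith)
    · intro x hx
      rw [interior_Icc] at hx
      have hxpos : 0 < x := by have := hx.1; linarith
      exact ((hfD x (hVpos x hxpos.le).ne').differentiableAt).differentiableWithinAt
    · intro x hx
      rw [interior_Icc] at hx
      have hxpos : 0 < x := by have := hx.1; linarith
      rw [(hfD x (hVpos x hxpos.le).ne').deriv, hkey x]
      apply div_nonneg _ (sq_nonneg _)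
      have hg := hgneg x hx.2
      have he := Real.exp_pos ((a1+a3)*x)
      nlinarith
  have hantiOn : AntitoneOn f (Icc x0 (x0+1)) := by
    apply antitoneOn_of_deriv_nonpos (convex_Icc _ _)
    · exact hcontf _ (fun x hx => by have := hx.1; linarith)
    · intro x hx
      rw [interior_Icc] at hx
      have hxpos : 0 < x := by have := hx.1; linarith
      exact ((hfD x (hVpos x hxpos.le).ne').differentiableAt).differentiableWithinAt
    · intro x hx
      rw [interior_Icc] at hx
      have hxpos : 0 < x := by have := hx.1; linarith
      rw [(hfD x (hVpos x hxpos.le).ne').deriv, hkey x]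
      apply div_nonpos_of_nonpos_of_nonneg _ (sq_nonneg _)
      have hg := hgpos x hx.1
      have he := Real.exp_pos ((a1+a3)*x)
      nlinarith
  refine ⟨x0, hx0pos, ?_⟩
  have hmem : Ioo (x0/2) (x0+1) ∈ nhds x0 := Ioo_mem_nhds (by linarith) (by linarith)
  filter_upwards [hmem] with y hy
  rcases le_total y x0 with h | h
  · exact hmonoOn ⟨hy.1.le, h⟩ ⟨by linarith, le_refl x0⟩ h
  · exact hantiOn ⟨le_refl x0, by linarith⟩ ⟨h, hy.2.le⟩ h


theorem stmt7 (a1 a2 a3 A1 A2 A3 : ℝ) (h12 : a1 < a2) (h23 : a2 < a3) (h3 : a3 < 0)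
    (hA3 : 0 < A3)
    (V : ℝ → ℝ)
    (hV : V = fun x => A1 * Real.exp (a1 * x) + A2 * Real.exp (a2 * x) + A3 * Real.exp (a3 * x))
    (hV0 : 0 < V 0) (hV'0 : deriv V 0 = 0) (hV''0 : deriv (deriv V) 0 < 0) :
    (∃ xb : ℝ, 0 < xb ∧ IsLocalMax (fun x => -deriv V x / V x) xb) ↔ 0 < A2 := by
  subst hV
  have hdV : (deriv fun x => A1 * Real.exp (a1 * x) + A2 * Real.exp (a2 * x) + A3 * Real.exp (a3 * x))
      = fun x => A1*a1*Real.exp (a1*x) + A2*a2*Real.exp (a2*x) + A3*a3*Real.exp (a3*x) :=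
    funext fun x => (hasDerivAt_expsum a1 a2 a3 A1 A2 A3 x).deriv
  have hdV2 : (deriv fun x => A1*a1*Real.exp (a1*x) + A2*a2*Real.exp (a2*x) + A3*a3*Real.exp (a3*x))
      = fun x => A1*a1^2*Real.exp (a1*x) + A2*a2^2*Real.exp (a2*x) + A3*a3^2*Real.exp (a3*x) := by
    funext x
    have h := (hasDerivAt_expsum a1 a2 a3 (A1*a1) (A2*a2) (A3*a3) x).deriv
    rw [h]
    ring
  have hsum : 0 < A1 + A2 + A3 := by simpa using hV0
  rw [hdV] at hV'0 hV''0
  have hlin : A1*a1 + A2*a2 + A3*a3 = 0 := by simpa using hV'0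
  rw [hdV2] at hV''0
  have hquad : A1*a1^2 + A2*a2^2 + A3*a3^2 < 0 := by simpa using hV''0
  rw [hdV]
  constructor
  · rintro ⟨xb, hxb, hmax⟩
    by_contra hA2
    push_neg at hA2
    exact no_max_aux a1 a2 a3 A1 A2 A3 h12 h23 h3 hA3 hA2 hsum hlin hquad xb hxb hmax
  · intro hA2
    exact max_aux a1 a2 a3 A1 A2 A3 h12 h23 h3 hA3 hA2 hsum hlin hquad
end

section
/- Let n ≥ 3 and V(x) = Σ_{i=1}^n A_i e^{a_i x} with a_1 < ... < a_n < 0, A_n > 0 and A_{n-1} > 0, and suppose V(0) > 0, V'(0) = 0, V''(0) < 0. Then there exists x_b > 0 such that (V'(x_b))^2 - V(x_b)·V''(x_b) = 0. -/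
open Real Filter

lemma stmt8_aux_deriv (m : ℕ) (B b : Fin m → ℝ) (x : ℝ) :
    HasDerivAt (fun x => ∑ i, B i * Real.exp (b i * x))
      (∑ i, (B i * b i) * Real.exp (b i * x)) x := by
  apply HasDerivAt.fun_sum
  intro i _
  have h := (((hasDerivAt_id x).const_mul (b i)).exp).const_mul (B i)
  have h2 : B i * (Real.exp (b i * id x) * (b i * 1)) = B i * b i * Real.exp (b i * x) := by
    simp; ring
  rw [h2] at h
  exact h

theorem stmt8 (n : ℕ) (hn : 3 ≤ n) (A a : Fin n → ℝ) (ha : StrictMono a)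
    (haneg : ∀ i, a i < 0)
    (hAn : 0 < A ⟨n - 1, by omega⟩) (hAn1 : 0 < A ⟨n - 2, by omega⟩)
    (V : ℝ → ℝ) (hV : V = fun x => ∑ i, A i * Real.exp (a i * x))
    (hV0 : 0 < V 0) (hV'0 : deriv V 0 = 0) (hV''0 : deriv (deriv V) 0 < 0) :
    ∃ xb : ℝ, 0 < xb ∧ (deriv V xb) ^ 2 - V xb * deriv (deriv V) xb = 0 := by
  set p : Fin n := ⟨n - 1, by omega⟩ with hp
  set q : Fin n := ⟨n - 2, by omega⟩ with hq
  have hqp : q < p := by rw [Fin.lt_def]; simp [hp, hq]; omega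
  have hqpne : q ≠ p := ne_of_lt hqp
  have haqp : a q < a p := ha hqp
  -- derivatives
  have hD1 : deriv V = fun x => ∑ i, (A i * a i) * Real.exp (a i * x) := by
    funext x; rw [hV]; exact (stmt8_aux_deriv n A a x).deriv
  have hD2 : deriv (deriv V) = fun x => ∑ i, ((A i * a i) * a i) * Real.exp (a i * x) := by
    rw [hD1]; funext x; exact (stmt8_aux_deriv n (fun i => A i * a i) a x).deriv
  set f : ℝ → ℝ := fun x => (deriv V x) ^ 2 - V x * deriv (deriv V) x with hf
  have hf0 : 0 < f 0 := by
    simp only [hf, hV'0]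
    nlinarith [hV0, hV''0]
  set c : Fin n → Fin n → ℝ := fun i j => A i * A j * a j * (a i - a j) with hc
  have hfx : ∀ x, f x = ∑ pr : Fin n × Fin n, c pr.1 pr.2 * Real.exp ((a pr.1 + a pr.2) * x) := by
    intro x
    rw [Fintype.sum_prod_type]
    simp only [hf]
    simp only [hD2]
    simp only [hD1]
    simp only [hV]
    simp only [hc]
    rw [sq, Finset.sum_mul_sum, Finset.sum_mul_sum, ← Finset.sum_sub_distrib]
    refine Finset.sum_congr rfl fun i _ => ?_
    rw [← Finset.sum_sub_distrib]
    refine Finset.sum_congr rfl fun j _ => ?_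
    rw [add_mul, Real.exp_add]; ring
  set s : ℝ := a q + a p with hs
  -- key monotonicity facts
  have hle_p : ∀ i : Fin n, a i ≤ a p := by
    intro i
    exact ha.monotone (by rw [Fin.le_def, hp]; have := i.isLt; simp; omega)
  have hle_q : ∀ i : Fin n, (i : ℕ) ≤ n - 2 → a i ≤ a q := by
    intro i hi
    exact ha.monotone (by rw [Fin.le_def, hq]; simpa using hi)
  have key : ∀ i j : Fin n, i < j → (i, j) ≠ (q, p) → a i + a j < s := by
    intro i j hij hne
    have hjp : a j ≤ a p := hle_p j
    have hiq : a i ≤ a q := by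
      apply hle_q
      have h1 : (i : ℕ) < (j : ℕ) := hij
      have h2 := j.isLt
      omega
    by_cases hjp' : j = p
    · have hiq' : i ≠ q := by
        rintro rfl
        exact hne (by rw [hjp'])
      have hlt : i < q := lt_of_le_of_ne (by
        rw [Fin.le_def, hq]
        have h1 : (i : ℕ) < (j : ℕ) := hij
        have h2 := j.isLt
        simp; omega) hiq'
      have : a i < a q := ha hlt
      rw [hs]; linarith
    · have : a j < a p := ha (lt_of_le_of_ne (by
        rw [Fin.le_def, hp]; have := j.isLt; simp; omega) hjp')
      rw [hs]; linarith
  -- the limit function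
  set L : Fin n × Fin n → ℝ := fun pr =>
    (if pr = (q, p) then c q p else 0) + (if pr = (p, q) then c p q else 0) with hL
  have hgx : ∀ x, f x * Real.exp (-s * x)
      = ∑ pr : Fin n × Fin n, c pr.1 pr.2 * Real.exp ((a pr.1 + a pr.2 - s) * x) := by
    intro x
    rw [hfx x, Finset.sum_mul]
    refine Finset.sum_congr rfl fun pr _ => ?_
    rw [mul_assoc, ← Real.exp_add]
    ring_nf
  have hten : Tendsto (fun x => f x * Real.exp (-s * x)) atTop
      (nhds (∑ pr : Fin n × Fin n, L pr)) := by
    simp only [hgx]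
    apply tendsto_finset_sum
    rintro ⟨i, j⟩ _
    by_cases h1 : (i, j) = (q, p)
    · rw [Prod.mk.injEq] at h1
      obtain ⟨rfl, rfl⟩ := h1
      have hLval : L (q, p) = c q p := by
        simp [hL, Prod.ext_iff, hqpne, hqpne.symm]
      rw [hLval]
      have : ∀ x : ℝ, c q p * Real.exp ((a q + a p - s) * x) = c q p := by
        intro x
        rw [hs]
        ring_nf
        simp
      simp only [this]
      exact tendsto_const_nhds
    · by_cases h2 : (i, j) = (p, q)
      · rw [Prod.mk.injEq] at h2
        obtain ⟨rfl, rfl⟩ := h2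
        have hLval : L (p, q) = c p q := by
          simp [hL, Prod.ext_iff, hqpne, hqpne.symm]
        rw [hLval]
        have : ∀ x : ℝ, c p q * Real.exp ((a p + a q - s) * x) = c p q := by
          intro x
          rw [hs]
          ring_nf
          simp
        simp only [this]
        exact tendsto_const_nhds
      · have hLval : L (i, j) = 0 := by simp [hL, h1, h2]
        rw [hLval]
        rcases eq_or_ne i j with rfl | hij0
        · have hc0 : c i i = 0 := by simp [hc]
          simp only [hc0, zero_mul]
          exact tendsto_const_nhds
        · have hexp : a i + a j - s < 0 := by
            rcases lt_or_gt_of_ne hij0 with h | h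
            · have := key i j h h1
              linarith
            · have := key j i h (by
                intro hcon
                apply h2
                rw [Prod.ext_iff] at hcon ⊢
                exact ⟨hcon.2, hcon.1⟩)
              linarith
          have h0 : Tendsto (fun x : ℝ => (a i + a j - s) * x) atTop atBot :=
            tendsto_id.const_mul_atTop_of_neg hexp
          have h3 : Tendsto (fun x : ℝ => Real.exp ((a i + a j - s) * x)) atTop (nhds 0) :=
            Real.tendsto_exp_atBot.comp h0
          simpa using h3.const_mul (c i j)
  -- the limit is negative
  have hLsum : (∑ pr : Fin n × Fin n, L pr) = c q p + c p q := by
    simp only [hL]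
    rw [Finset.sum_add_distrib]
    rw [Finset.sum_ite_eq' Finset.univ (q, p) (fun _ => c q p),
        Finset.sum_ite_eq' Finset.univ (p, q) (fun _ => c p q)]
    simp
  have hAp : 0 < A p := hAn
  have hAq : 0 < A q := hAn1
  have hLneg : (∑ pr : Fin n × Fin n, L pr) < 0 := by
    rw [hLsum]
    have hcc : c q p + c p q = -(A q * A p * (a p - a q) ^ 2) := by
      simp only [hc]; ring
    rw [hcc]
    have hpos : 0 < A q * A p * (a p - a q) ^ 2 :=
      mul_pos (mul_pos hAq hAp) (pow_pos (sub_pos.mpr haqp) 2)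
    linarith
  have hev : ∀ᶠ x in atTop, f x * Real.exp (-s * x) < 0 :=
    hten.eventually_lt_const hLneg
  obtain ⟨x1, hx1pos, hx1neg⟩ := ((eventually_gt_atTop (0 : ℝ)).and hev).exists
  have hfx1 : f x1 < 0 := by
    nlinarith [Real.exp_pos (-s * x1), hx1neg]
  have hcont : Continuous f := by
    rw [funext hfx]
    exact continuous_finset_sum _ fun pr _ =>
      continuous_const.mul (Real.continuous_exp.comp (continuous_const.mul continuous_id))
  have hivt := intermediate_value_Ioo' (le_of_lt hx1pos) hcont.continuousOn
  have h0mem : (0 : ℝ) ∈ Set.Ioo (f x1) (f 0) := ⟨hfx1, hf0⟩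
  obtain ⟨xb, hxb, hfxb⟩ := hivt h0mem
  exact ⟨xb, hxb.1, hfxb⟩
end
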